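/- Let F be a non-abelian free group of finite rank and let K be a subgroup of F of infinite index. If K contains a nontrivial normal subgroup L of F, then K is not finitely generated. -/

import Mathlib

open List

set_option linter.unusedSectionVars false

namespace KS

variable {α : Type*} [DecidableEq α]


/-- non-cancelling adjacency -/
def NC (a b : α × Bool) : Prop := ¬(a.1 = b.1 ∧ a.2 = !b.2)

theorem reduce_eq_self_of_chain' {w : List (α × Bool)} (h : List.Chain' NC w) :
    FreeGroup.reduce w = w := by
  induction w with
  | nil => rfl
  | cons x L ih =>
    have hL : FreeGroup.reduce L = L := ih h.tail
    rw [FreeGroup.reduce.cons, hL]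
    cases L with
    | nil => rfl
    | cons hd tl =>
      have hnc : NC x hd := (List.isChain_cons_cons.mp h).1
      simp only [NC] at hnc
      show (if x.1 = hd.1 ∧ x.2 = !hd.2 then tl else x :: hd :: tl) = x :: hd :: tl
      rw [if_neg hnc]

theorem chain'_of_reduce_eq_self {w : List (α × Bool)} (h : FreeGroup.reduce w = w) :
    List.Chain' NC w := by
  induction w with
  | nil => exact List.isChain_nil
  | cons x L ih =>
    have hlen : ∀ M : List (α × Bool), (FreeGroup.reduce M).length ≤ M.length :=
      fun M => FreeGroup.Red.length_le FreeGroup.reduce.red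
    rw [FreeGroup.reduce.cons] at h
    rcases hrl : FreeGroup.reduce L with _ | ⟨hd, tl⟩
    · rw [hrl] at h
      have h' : [x] = x :: L := h
      have : L = [] := by injection h' with _ h2; exact h2.symm
      rw [this]
      exact List.isChain_singleton x
    · rw [hrl] at h
      have h' : (if x.1 = hd.1 ∧ x.2 = !hd.2 then tl else x :: hd :: tl) = x :: L := h
      clear h
      by_cases ht : x.1 = hd.1 ∧ x.2 = !hd.2
      · rw [if_pos ht] at h'
        exfalso
        have h1 : tl.length ≤ L.length := by
          have := hlen L
          rw [hrl] at this
          simpa using Nat.le_of_succ_le this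
        have : (x :: L).length = tl.length := by rw [h']
        simp [List.length_cons] at this
        omega
      · rw [if_neg ht] at h'
        have hL : L = hd :: tl := by
          injection h' with _ h2
          exact h2.symm
        rw [hL]
        refine List.isChain_cons_cons.mpr ⟨ht, ?_⟩
        rw [← hL]
        exact ih (by rw [hrl, hL])

theorem chain'_toWord (x : FreeGroup α) : List.Chain' NC x.toWord :=
  chain'_of_reduce_eq_self (FreeGroup.reduce_toWord x)



theorem prefix_split {A B p : List α} (h : p <+: A ++ B) :
    p <+: A ∨ ∃ r, r <+: B ∧ p = A ++ r := by
  obtain ⟨t, ht⟩ := h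
  rcases List.append_eq_append_iff.mp ht with ⟨a', ha1, _⟩ | ⟨c', hc1, hc2⟩
  · exact Or.inl ⟨a', ha1.symm⟩
  · exact Or.inr ⟨c', ⟨t, hc2.symm⟩, hc1⟩

theorem mk_pair_eq_one (x : α) (b : Bool) :
    FreeGroup.mk [(x, b), (x, !b)] = 1 := by
  have : FreeGroup.Red.Step [(x, b), (x, !b)] [] := FreeGroup.Red.Step.cons_not
  exact Quot.sound this

/-- every prefix of a reduct is `mk`-equal to a prefix of the original word -/
theorem red_prefix {w w' : List (α × Bool)} (h : FreeGroup.Red w w') :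
    ∀ p : List (α × Bool), p <+: w' →
    ∃ q, q <+: w ∧ FreeGroup.mk q = FreeGroup.mk p := by
  induction h with
  | refl => exact fun p hp => ⟨p, hp, rfl⟩
  | tail _hred hstep ih =>
    intro p hp
    rcases hstep with @⟨L₁, L₂, x, b⟩
    rcases prefix_split hp with h1 | ⟨r, hr, rfl⟩
    · exact ih p (h1.trans (List.prefix_append _ _))
    · obtain ⟨q, hq, he⟩ := ih (L₁ ++ (x, b) :: (x, !b) :: r)
        ⟨L₂.drop r.length, by obtain ⟨t, rfl⟩ := hr; simp⟩
      refine ⟨q, hq, ?_⟩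
      rw [he]
      have h2 : FreeGroup.mk (L₁ ++ (x, b) :: (x, !b) :: r)
          = FreeGroup.mk L₁ * FreeGroup.mk [(x, b), (x, !b)] * FreeGroup.mk r := by
        rw [FreeGroup.mul_mk, FreeGroup.mul_mk]; simp
      rw [h2, mk_pair_eq_one, mul_one, FreeGroup.mul_mk]

theorem prefix_reduce {w p : List (α × Bool)} (hp : p <+: FreeGroup.reduce w) :
    ∃ q, q <+: w ∧ FreeGroup.mk q = FreeGroup.mk p :=
  red_prefix FreeGroup.reduce.red p hp




theorem invRev_append (A B : List (α × Bool)) :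
    FreeGroup.invRev (A ++ B) = FreeGroup.invRev B ++ FreeGroup.invRev A := by
  simp [FreeGroup.invRev]

/-- prefixes of elements of `closure T` are, up to coset, prefixes of generators -/
theorem closure_prefix {T : Set (FreeGroup α)} {u : FreeGroup α}
    (hu : u ∈ Subgroup.closure T) :
    ∀ p : List (α × Bool), p <+: u.toWord →
      ∃ k ∈ Subgroup.closure T, ∃ q : List (α × Bool),
        (q = [] ∨ ∃ t ∈ T, q <+: FreeGroup.toWord t) ∧
        FreeGroup.mk p = k * FreeGroup.mk q := by
  induction hu using Subgroup.closure_induction with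
  | mem t ht =>
    intro p hp
    exact ⟨1, one_mem _, p, Or.inr ⟨t, ht, hp⟩, (one_mul _).symm⟩
  | one =>
    intro p hp
    rw [FreeGroup.toWord_one, List.prefix_nil] at hp
    exact ⟨1, one_mem _, [], Or.inl rfl, by rw [hp, one_mul]⟩
  | mul u v hu hv ihu ihv =>
    intro p hp
    have hmul : (u * v).toWord = FreeGroup.reduce (u.toWord ++ v.toWord) := by
      conv_lhs => rw [← FreeGroup.mk_toWord (x := u), ← FreeGroup.mk_toWord (x := v)]
      rw [FreeGroup.mul_mk, FreeGroup.toWord_mk]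
    rw [hmul] at hp
    obtain ⟨r, hr, hmk⟩ := prefix_reduce hp
    rcases prefix_split hr with h1 | ⟨r', hr', rfl⟩
    · obtain ⟨k, hk, q, hq, he⟩ := ihu r h1
      exact ⟨k, hk, q, hq, by rw [← hmk, he]⟩
    · obtain ⟨k, hk, q, hq, he⟩ := ihv r' hr'
      refine ⟨u * k, mul_mem hu hk, q, hq, ?_⟩
      have : FreeGroup.mk (u.toWord ++ r') = u * FreeGroup.mk r' := by
        conv_rhs => rw [← FreeGroup.mk_toWord (x := u)]
        rw [FreeGroup.mul_mk]
      rw [← hmk, this, he, mul_assoc]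
  | inv u hu ihu =>
    intro p hp
    rw [FreeGroup.toWord_inv] at hp
    obtain ⟨r, hwr⟩ := hp
    -- u.toWord = invRev r ++ invRev p
    have hu2 : u.toWord = FreeGroup.invRev r ++ FreeGroup.invRev p := by
      have := congrArg FreeGroup.invRev hwr
      rw [invRev_append, FreeGroup.invRev_invRev] at this
      exact this.symm
    obtain ⟨k, hk, q, hq, he⟩ := ihu (FreeGroup.invRev r) ⟨FreeGroup.invRev p, hu2.symm⟩
    refine ⟨u⁻¹ * k, mul_mem (inv_mem hu) hk, q, hq, ?_⟩
    have hup : u = FreeGroup.mk (FreeGroup.invRev r) * (FreeGroup.mk p)⁻¹ := by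
      conv_lhs => rw [← FreeGroup.mk_toWord (x := u)]
      rw [hu2, ← FreeGroup.mul_mk, FreeGroup.inv_mk]
    rw [mul_assoc, ← he, hup]
    group




theorem invRev_replicate (n : ℕ) (s : α) (b : Bool) :
    FreeGroup.invRev (List.replicate n (s, b)) = List.replicate n (s, !b) := by
  simp [FreeGroup.invRev, List.map_replicate]

theorem mk_replicate_true (s : α) (n : ℕ) :
    FreeGroup.mk (List.replicate n (s, true)) = (FreeGroup.of s) ^ n := by
  rw [← FreeGroup.toWord_of_pow, FreeGroup.mk_toWord]

theorem mk_replicate_false (s : α) (n : ℕ) :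
    FreeGroup.mk (List.replicate n (s, false)) = ((FreeGroup.of s) ^ n)⁻¹ := by
  rw [← mk_replicate_true s n, FreeGroup.inv_mk, invRev_replicate]
  simp

/-- Given `l ≠ 1` and a forbidden base letter `x₁`, with some `s ≠ x₁` available,
produce a conjugate of `l` whose reduced word starts and ends with base ≠ x₁. -/
theorem head?_dropWhile_ne (p : α × Bool → Bool) :
    ∀ (l : List (α × Bool)) {x}, (l.dropWhile p).head? = some x → p x = false := by
  intro l
  induction l with
  | nil => intro x hx; cases hx
  | cons a t ih =>
    intro x hx
    rw [List.dropWhile_cons] at hx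
    by_cases h : p a
    · rw [if_pos h] at hx; exact ih hx
    · rw [if_neg h] at hx
      simp only [List.head?_cons, Option.some_inj] at hx
      rw [← hx]
      simpa using h

theorem exists_good_conj (l : FreeGroup α) (hl : l ≠ 1) (x₁ s : α) (hs : s ≠ x₁) :
    ∃ c : FreeGroup α, (∃ u : FreeGroup α, c = u * l * u⁻¹) ∧ c.toWord ≠ [] ∧
      (∀ h ∈ c.toWord.head?, h.1 ≠ x₁) ∧ (∀ z ∈ c.toWord.getLast?, z.1 ≠ x₁) := by
  set W := l.toWord with hWdef
  have hWne : W ≠ [] := fun h => hl (FreeGroup.toWord_eq_nil_iff.mp h)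
  by_cases hall : ∀ p ∈ W, p.1 = s
  · refine ⟨l, ⟨1, by group⟩, hWne, ?_, ?_⟩
    · intro h hh
      rw [hall h (List.mem_of_mem_head? hh)]; exact hs
    · intro z hz
      rw [hall z (List.mem_of_mem_getLast? hz)]; exact hs
  · push_neg at hall
    obtain ⟨p₀, hp₀W, hp₀⟩ := hall
    set pf : α × Bool → Bool := fun p => p == (s, false) with hpf
    set pt : α × Bool → Bool := fun p => p == (s, true) with hpt
    set A := W.takeWhile pf with hAdef
    set W₁ := W.dropWhile pf with hW₁def
    set a := A.length with hadef
    set W₂ := (W₁.reverse.dropWhile pt).reverse with hW₂def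
    set b := (W₁.reverse.takeWhile pt).length with hbdef
    have hW : W = A ++ W₁ := (List.takeWhile_append_dropWhile ..).symm
    have hA : A = List.replicate a (s, false) :=
      List.eq_replicate_iff.mpr ⟨rfl, fun x hx => by
        have := List.mem_takeWhile_imp hx; simpa [hpf] using this⟩
    have hB : W₁.reverse.takeWhile pt = List.replicate b (s, true) :=
      List.eq_replicate_iff.mpr ⟨rfl, fun x hx => by
        have := List.mem_takeWhile_imp hx; simpa [hpt] using this⟩
    have hW₁ : W₁ = W₂ ++ List.replicate b (s, true) := by
      conv_lhs => rw [← List.reverse_reverse W₁,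
        ← List.takeWhile_append_dropWhile (p := pt) (l := W₁.reverse)]
      rw [List.reverse_append, hB, List.reverse_replicate]
    have hW₂ne : W₂ ≠ [] := by
      intro h
      rw [h, List.nil_append] at hW₁
      apply hp₀
      rw [hW, hA, hW₁] at hp₀W
      rcases List.mem_append.mp hp₀W with h1 | h1 <;>
        simpa using congrArg Prod.fst (List.eq_of_mem_replicate h1)
    have hW₂head : ∀ h ∈ W₂.head?, h ≠ (s, false) := by
      intro h hh heq
      rw [Option.mem_def] at hh
      have h1 : W₁.head? = some h := by
        rw [hW₁, List.head?_append, hh]; rfl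
      have := head?_dropWhile_ne pf W (hW₁def ▸ h1)
      rw [heq] at this
      simp [hpf] at this
    have hW₂last : ∀ z ∈ W₂.getLast?, z ≠ (s, true) := by
      intro z hz heq
      rw [Option.mem_def] at hz
      have h1 : (W₁.reverse.dropWhile pt).head? = some z := by
        rw [hW₂def, List.getLast?_reverse] at hz
        exact hz
      have := head?_dropWhile_ne pt W₁.reverse h1
      rw [heq] at this
      simp [hpt] at this
    have ha_le : a ≤ W.length := by
      rw [hadef, hAdef]; exact (List.takeWhile_prefix pf).length_le
    have hb_le : b ≤ W.length := by
      calc b ≤ W₁.reverse.length := (List.takeWhile_prefix pt).length_le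
        _ = W₁.length := List.length_reverse
        _ ≤ W.length := by rw [hW]; simp
    set m := W.length + 1 with hm
    set σ := FreeGroup.of s with hσ
    have hl_eq : l = (σ ^ a)⁻¹ * (FreeGroup.mk W₂ * σ ^ b) := by
      conv_lhs => rw [← FreeGroup.mk_toWord (x := l), ← hWdef]
      rw [hW, hA, hW₁, ← FreeGroup.mul_mk, ← FreeGroup.mul_mk,
        mk_replicate_false, mk_replicate_true]
    set D := List.replicate (m - a) (s, true) ++ W₂ ++ List.replicate (m - b) (s, false)
      with hD
    have hmkD : FreeGroup.mk D = σ ^ (m - a) * FreeGroup.mk W₂ * (σ ^ (m - b))⁻¹ := by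
      rw [hD, ← FreeGroup.mul_mk, ← FreeGroup.mul_mk, mk_replicate_true, mk_replicate_false]
    have hceq : σ ^ m * l * (σ ^ m)⁻¹ = FreeGroup.mk D := by
      rw [hl_eq, hmkD]
      have h1 : σ ^ (m - a) = σ ^ m * (σ ^ a)⁻¹ := by
        rw [eq_mul_inv_iff_mul_eq, ← pow_add]; congr 1; omega
      have h2 : σ ^ (m - b) = σ ^ m * (σ ^ b)⁻¹ := by
        rw [eq_mul_inv_iff_mul_eq, ← pow_add]; congr 1; omega
      rw [h1, h2]
      group
    have hma : m - a ≠ 0 := by omega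
    have hmb : m - b ≠ 0 := by omega
    have hchain : List.Chain' NC D := by
      have hcW₂ : List.Chain' NC W₂ := by
        refine (chain'_toWord l).infix ?_
        refine ⟨A, List.replicate b (s, true), ?_⟩
        rw [← hWdef, hW, hW₁, List.append_assoc]
      have hrt : List.Chain' NC (List.replicate (m - a) (s, true)) :=
        List.isChain_replicate_of_rel _ (by simp [NC])
      have hrf : List.Chain' NC (List.replicate (m - b) (s, false)) :=
        List.isChain_replicate_of_rel _ (by simp [NC])
      refine List.IsChain.append (List.IsChain.append hrt hcW₂ ?_) hrf ?_
      · intro x hx y hy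
        rw [Option.mem_def, List.getLast?_replicate, if_neg hma, Option.some_inj] at hx
        rintro ⟨he1, he2⟩
        apply hW₂head y hy
        rw [← hx] at he1 he2
        have hy2 : y.2 = false := by
          cases hval : y.2
          · rfl
          · rw [hval] at he2; simp at he2
        rw [Prod.ext_iff]
        exact ⟨he1.symm, hy2⟩
      · intro x hx y hy
        rw [Option.mem_def, List.getLast?_append] at hx
        have hx2 : W₂.getLast? = some x := by
          have hWg : W₂.getLast? ≠ none := by
            rw [Ne, List.getLast?_eq_none_iff]
            exact hW₂ne
          obtain ⟨z, hz⟩ := Option.ne_none_iff_exists'.mp hWg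
          rw [hz] at hx
          simp only [Option.some_or] at hx
          rw [hz, hx]
        rw [Option.mem_def, List.head?_replicate, if_neg hmb, Option.some_inj] at hy
        rintro ⟨he1, he2⟩
        apply hW₂last x hx2
        rw [← hy] at he1 he2
        simp only at he1 he2
        have hx2' : x.2 = true := by simpa using he2
        rw [Prod.ext_iff]
        exact ⟨he1, hx2'⟩
    have htoWord : (σ ^ m * l * (σ ^ m)⁻¹).toWord = D := by
      rw [hceq, FreeGroup.toWord_mk, reduce_eq_self_of_chain' hchain]
    refine ⟨σ ^ m * l * (σ ^ m)⁻¹, ⟨σ ^ m, rfl⟩, ?_, ?_, ?_⟩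
    · rw [htoWord]
      intro hc
      have := congrArg List.length hc
      simp [hD] at this
      omega
    · intro h hh
      rw [Option.mem_def, htoWord, hD] at hh
      rw [List.head?_append, List.head?_append, List.head?_replicate, if_neg hma] at hh
      simp only [Option.some_or] at hh
      rw [Option.some_inj] at hh
      rw [← hh]
      exact hs
    · intro z hz
      rw [Option.mem_def, htoWord, hD] at hz
      rw [List.getLast?_append, List.getLast?_replicate, if_neg hmb] at hz
      simp only [Option.some_or] at hz
      rw [Option.some_inj] at hz
      rw [← hz]
      exact hs

end KS

/-- A subgroup of infinite index in a non-abelian free group of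
finite rank which contains a nontrivial normal subgroup is not finitely generated. -/
theorem stmt_2 {S : Type*} [Finite S] (hS : 2 ≤ Nat.card S)
    (K L : Subgroup (FreeGroup S))
    (hinf : Infinite (FreeGroup S ⧸ K))
    (hLK : L ≤ K) (hL : L.Normal) (hne : L ≠ ⊥) :
    ¬ K.FG := by
  classical
  intro hFG
  obtain ⟨T, hT⟩ := hFG
  obtain ⟨⟨l, hlL⟩, hlne⟩ := Subgroup.ne_bot_iff_exists_ne_one.mp hne
  have hl1 : l ≠ 1 := by simpa [Subtype.ext_iff] using hlne
  -- the finite set of "core" elements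
  set Q : Finset (FreeGroup S) :=
    insert 1 (T.biUnion fun t => (FreeGroup.toWord t).inits.toFinset.image FreeGroup.mk)
    with hQ
  set C : Finset (FreeGroup S ⧸ K) :=
    Q.image (fun v => ((v⁻¹ : FreeGroup S) : FreeGroup S ⧸ K)) with hC
  obtain ⟨xq, hxq⟩ := Infinite.exists_notMem_finset C
  obtain ⟨y, rfl⟩ := QuotientGroup.mk_surjective xq
  set g := y⁻¹ with hg
  have hkey : ∀ v ∈ Q, ∀ k ∈ K, g ≠ k * v := by
    intro v hv k hk hgkv
    apply hxq
    rw [hC, Finset.mem_image]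
    refine ⟨v, hv, ?_⟩
    rw [QuotientGroup.eq]
    have hy : y = v⁻¹ * k⁻¹ := by
      rw [← mul_inv_rev, ← hgkv, hg, inv_inv]
    rw [hy, inv_inv, ← mul_assoc, mul_inv_cancel, one_mul]
    exact inv_mem hk
  have hQmem : ∀ q : List (S × Bool),
      (q = [] ∨ ∃ t ∈ (T : Set (FreeGroup S)), q <+: FreeGroup.toWord t) →
      FreeGroup.mk q ∈ Q := by
    rintro q (rfl | ⟨t, ht, hq⟩)
    · rw [hQ]
      have : FreeGroup.mk ([] : List (S × Bool)) = 1 := FreeGroup.one_eq_mk.symm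
      rw [this]
      exact Finset.mem_insert_self 1 _
    · rw [hQ]
      refine Finset.mem_insert_of_mem (Finset.mem_biUnion.mpr ⟨t, ht, ?_⟩)
      exact Finset.mem_image.mpr ⟨q, List.mem_toFinset.mpr ((List.mem_inits ..).mpr hq), rfl⟩
  have hg1 : g ≠ 1 := by
    intro h
    exact hkey 1 (Finset.mem_insert_self 1 _) 1 (one_mem K) (by rw [h, mul_one])
  set G := g.toWord with hG
  have hGne : G ≠ [] := fun h => hg1 (FreeGroup.toWord_eq_nil_iff.mp h)
  set x := G.getLast hGne with hx
  obtain ⟨s, hsne⟩ : ∃ s : S, s ≠ x.1 := by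
    have : Nontrivial S := Finite.one_lt_card_iff_nontrivial.mp (by omega)
    exact exists_ne x.1
  obtain ⟨c, ⟨u, hcu⟩, hcne, hchead, hclast⟩ := KS.exists_good_conj l hl1 x.1 s hsne
  have hcL : c ∈ L := by rw [hcu]; exact hL.conj_mem l hlL u
  have hwK : g * c * g⁻¹ ∈ K := hLK (hL.conj_mem c hcL g)
  have hchainw : List.Chain' KS.NC (G ++ c.toWord ++ g⁻¹.toWord) := by
    refine List.IsChain.append
      (List.IsChain.append (KS.chain'_toWord g) (KS.chain'_toWord c) ?_)
      (KS.chain'_toWord g⁻¹) ?_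
    · intro z hz h hh
      rw [Option.mem_def, List.getLast?_eq_getLast (l := G) hGne, Option.some_inj] at hz
      rintro ⟨h1, _⟩
      exact hchead h hh (by rw [← h1, hx]; rw [hz])
    · intro z hz h hh
      rw [Option.mem_def, List.getLast?_append] at hz
      have hcW : c.toWord.getLast? ≠ none := by
        rw [Ne, List.getLast?_eq_none_iff]; exact hcne
      obtain ⟨z', hz'⟩ := Option.ne_none_iff_exists'.mp hcW
      rw [hz', Option.some_or, Option.some_inj] at hz
      have hzlast : z.1 ≠ x.1 := hclast z (by rw [Option.mem_def, hz', hz])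
      have hh' : h = (x.1, !x.2) := by
        rw [Option.mem_def, FreeGroup.toWord_inv, FreeGroup.invRev,
          List.head?_reverse, List.getLast?_map, ← hG,
          List.getLast?_eq_getLast (l := G) hGne] at hh
        simpa using hh.symm
      rintro ⟨h1, _⟩
      exact hzlast (by rw [h1, hh'])
  have hwW : (g * c * g⁻¹).toWord = G ++ c.toWord ++ g⁻¹.toWord := by
    have hmk : g * c * g⁻¹ = FreeGroup.mk (G ++ c.toWord ++ g⁻¹.toWord) := by
      rw [← FreeGroup.mul_mk, ← FreeGroup.mul_mk, hG, FreeGroup.mk_toWord,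
        FreeGroup.mk_toWord, FreeGroup.mk_toWord]
    rw [hmk, FreeGroup.toWord_mk, KS.reduce_eq_self_of_chain' hchainw]
  have hpre : G <+: (g * c * g⁻¹).toWord := by
    rw [hwW, List.append_assoc]
    exact ⟨c.toWord ++ g⁻¹.toWord, rfl⟩
  have hwcl : g * c * g⁻¹ ∈ Subgroup.closure (T : Set (FreeGroup S)) := by
    rw [hT]; exact hwK
  obtain ⟨k, hk, q, hq, he⟩ := KS.closure_prefix hwcl G hpre
  rw [hG, FreeGroup.mk_toWord] at he
  exact hkey (FreeGroup.mk q) (hQmem q hq) k (hT ▸ hk) he
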